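/- Let f be the martingale on a bounded Vilenkin group defined by f^{(A)} = Σ_{k : 2α_k < A} (1/α_k) a_k with a_k = (M_{2α_k}/M)(D_{M_{2α_k+1}} − D_{M_{2α_k}}), where {α_k} satisfies Σ_k α_k^{-1/2} < ∞. Then f belongs to the martingale Hardy space H_{1/2}(G_m). -/

import Mathlib

noncomputable section
open MeasureTheory Finset Filter
open scoped ENNReal NNReal

/-- M_0 = 1, M_{k+1} = m_k M_k, where the Vilenkin generating sequence is k ↦ m k + 2
(ensuring every term is at least 2). -/
def Mv (m : ℕ → ℕ) : ℕ → ℕ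
  | 0 => 1
  | k + 1 => (m k + 2) * Mv m k

/-- k-th digit of n in the generalized number system. -/
def digit (m : ℕ → ℕ) (n k : ℕ) : ℕ := (n / Mv m k) % (m k + 2)

/-- The Vilenkin group: complete direct product of the cyclic groups Z_{m_k + 2}. -/
abbrev GV (m : ℕ → ℕ) : Type := ∀ k : ℕ, ZMod (m k + 2)

instance (n : ℕ) : TopologicalSpace (ZMod (n + 2)) := ⊥
instance (n : ℕ) : DiscreteTopology (ZMod (n + 2)) := ⟨rfl⟩

instance (n : ℕ) : MeasurableSpace (ZMod (n + 2)) := ⊤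
instance (n : ℕ) : BorelSpace (ZMod (n + 2)) := ⟨(borel_eq_top_of_discrete).symm⟩

/-- The normalized Haar measure on the Vilenkin group. -/
def haarG (m : ℕ → ℕ) : Measure (GV m) :=
  Measure.addHaarMeasure (⊤ : TopologicalSpace.PositiveCompacts (GV m))

/-- Generalized Rademacher function r_k(x) = exp(2πi x_k / m_k). -/
def rad (m : ℕ → ℕ) (k : ℕ) (x : GV m) : ℂ :=
  Complex.exp (2 * Real.pi * Complex.I * ((x k).val : ℂ) / ((m k + 2 : ℕ) : ℂ))

/-- Vilenkin character ψ_n(x) = ∏_k r_k(x)^{n_k}. -/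
def vilenkin (m : ℕ → ℕ) (n : ℕ) (x : GV m) : ℂ :=
  ∏ k ∈ Finset.range n, rad m k x ^ digit m n k

/-- Dirichlet kernel D_n = ∑_{k<n} ψ_k. -/
def DK (m : ℕ → ℕ) (n : ℕ) (x : GV m) : ℂ :=
  ∑ k ∈ Finset.range n, vilenkin m k x

/-- Fejér kernel K_n = (1/n) ∑_{j=1}^n D_j. -/
def FK (m : ℕ → ℕ) (n : ℕ) (x : GV m) : ℂ :=
  (n : ℂ)⁻¹ * ∑ j ∈ Finset.range n, DK m (j + 1) x

/-- The interval I_n = {x : x_0 = ⋯ = x_{n-1} = 0}. -/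
def Iset (m : ℕ → ℕ) (n : ℕ) : Set (GV m) := {x | ∀ k < n, x k = 0}

/-- q_A = M_{2A} + M_{2A-2} + ⋯ + M_2 + M_0. -/
def qA (m : ℕ → ℕ) (A : ℕ) : ℕ := ∑ j ∈ Finset.range (A + 1), Mv m (2 * j)

/-- Fourier coefficient with respect to the Vilenkin system. -/
def fhat (m : ℕ → ℕ) (f : GV m → ℂ) (k : ℕ) : ℂ :=
  ∫ x, f x * (starRingEnd ℂ) (vilenkin m k x) ∂ haarG m

/-- Partial sums from a given sequence of Fourier coefficients. -/
def Sc (m : ℕ → ℕ) (c : ℕ → ℂ) (n : ℕ) (x : GV m) : ℂ :=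
  ∑ v ∈ Finset.range n, c v * vilenkin m v x

/-- Fejér means from a given sequence of Fourier coefficients. -/
def σc (m : ℕ → ℕ) (c : ℕ → ℂ) (n : ℕ) (x : GV m) : ℂ :=
  (n : ℂ)⁻¹ * ∑ k ∈ Finset.range n, Sc m c k x

/-- Partial sum operator S_n f for integrable f. -/
def Spart (m : ℕ → ℕ) (f : GV m → ℂ) (n : ℕ) (x : GV m) : ℂ :=
  Sc m (fhat m f) n x

/-- The filtration generated by the intervals I_n(x), i.e. by the first n coordinates. -/
def filtrationG (m : ℕ → ℕ) : Filtration ℕ (inferInstance : MeasurableSpace (GV m)) where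
  seq n := MeasurableSpace.comap (fun x (k : Fin n) => x k) inferInstance
  mono' := by
    intro a b hab
    show MeasurableSpace.comap (fun (x : GV m) (k : Fin a) => x k) inferInstance ≤
      MeasurableSpace.comap (fun (x : GV m) (k : Fin b) => x k) inferInstance
    have : (fun (x : GV m) (k : Fin a) => x k) =
        (fun (y : ∀ k : Fin b, ZMod (m k + 2)) (k : Fin a) => y (Fin.castLE hab k)) ∘
          (fun x (k : Fin b) => x k) := rfl
    rw [this, ← MeasurableSpace.comap_comp]
    exact MeasurableSpace.comap_mono
      ((measurable_pi_lambda _ fun k => measurable_pi_apply _).comap_le)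
  le' := fun n => (measurable_pi_lambda _ fun k => measurable_pi_apply _).comap_le


/-- The atom a = (M_{2β}/M)(D_{M_{2β+1}} - D_{M_{2β}}). -/
def aAtom (m : ℕ → ℕ) (M : ℕ) (β : ℕ) (x : GV m) : ℂ :=
  ((Mv m (2 * β) : ℂ) / (M : ℂ)) * (DK m (Mv m (2 * β + 1)) x - DK m (Mv m (2 * β)) x)

/-- The martingale f^{(A)} = ∑_{k : 2α_k < A} (1/α_k) a_k. -/
def fSeq (m : ℕ → ℕ) (M : ℕ) (α : ℕ → ℕ) (A : ℕ) (x : GV m) : ℂ :=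
  ∑ k ∈ (Finset.range A).filter (fun k => 2 * α k < A), ((α k : ℂ))⁻¹ * aAtom m M (α k) x

section Lemmas
variable {m : ℕ → ℕ}

lemma Mv_pos (m : ℕ → ℕ) (n : ℕ) : 0 < Mv m n := by
  induction n with
  | zero => simp [Mv]
  | succ k ih => simp only [Mv]; positivity

lemma two_pow_le_Mv (k : ℕ) : 2 ^ k ≤ Mv m k := by
  induction k with
  | zero => simp [Mv]
  | succ n ih =>
    simp only [Mv, pow_succ]
    calc 2 ^ n * 2 ≤ Mv m n * 2 := by nlinarith
    _ ≤ (m n + 2) * Mv m n := by nlinarith [Mv_pos m n]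

lemma lt_two_pow_Mv {v k : ℕ} (h : v ≤ k) : v < Mv m k :=
  lt_of_lt_of_le (lt_of_le_of_lt h (Nat.lt_two_pow_self (n := k))) (two_pow_le_Mv k)

lemma Mv_mono : Monotone (Mv m) := by
  apply monotone_nat_of_le_succ
  intro n
  simp only [Mv]
  nlinarith [Mv_pos m n]

lemma Mv_dvd {k n : ℕ} (h : k ≤ n) : Mv m k ∣ Mv m n := by
  induction n with
  | zero => simp_all
  | succ j ih =>
    rcases Nat.lt_or_ge k (j+1) with h' | h'
    · exact dvd_mul_of_dvd_right (ih (Nat.lt_succ_iff.mp h')) _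
    · have : k = j + 1 := le_antisymm h h'
      subst this; rfl

lemma digit_eq_zero_of_lt {v k : ℕ} (h : v < Mv m k) : digit m v k = 0 := by
  simp [digit, Nat.div_eq_of_lt h]

lemma digit_eq_zero_of_le {v k : ℕ} (h : v ≤ k) : digit m v k = 0 :=
  digit_eq_zero_of_lt (lt_two_pow_Mv h)

lemma digit_low {j u n k : ℕ} (hu : u < Mv m n) (hk : k < n) :
    digit m (j * Mv m n + u) k = digit m u k := by
  have hdvd : Mv m k ∣ Mv m n := Mv_dvd hk.le
  obtain ⟨c, hc⟩ := hdvd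
  have hmdvd : (m k + 2) ∣ c := by
    have h1 : Mv m (k+1) ∣ Mv m n := Mv_dvd hk
    obtain ⟨d, hd⟩ := h1
    have : Mv m k * c = Mv m k * ((m k + 2) * d) := by
      rw [← hc, hd]; simp [Mv]; ring
    have hc' : c = (m k + 2) * d := Nat.eq_of_mul_eq_mul_left (Mv_pos m k) this
    exact ⟨d, hc'⟩
  have hMk := Mv_pos m k
  simp only [digit]
  rw [hc]
  rw [show j * (Mv m k * c) + u = u + (j * c) * Mv m k by ring]
  rw [Nat.add_mul_div_right _ _ hMk]
  obtain ⟨d, hd⟩ := hmdvd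
  rw [hd, show u / Mv m k + j * ((m k + 2) * d) = u / Mv m k + (j * d) * (m k + 2) by ring]
  simp [Nat.add_mul_mod_self_right]

lemma digit_high {j u n : ℕ} (hu : u < Mv m n) (hj : j < m n + 2) :
    digit m (j * Mv m n + u) n = j := by
  simp only [digit]
  rw [show j * Mv m n + u = u + j * Mv m n by ring,
    Nat.add_mul_div_right _ _ (Mv_pos m n), Nat.div_eq_of_lt hu]
  simp [Nat.mod_eq_of_lt hj]

end Lemmas
section Vilenkin
open scoped Classical
variable {m : ℕ → ℕ}

lemma norm_rad (k : ℕ) (x : GV m) : ‖rad m k x‖ = 1 := by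
  simp only [rad]
  rw [show 2 * Real.pi * Complex.I * ((x k).val : ℂ) / ((m k + 2 : ℕ) : ℂ)
      = (((2 * Real.pi * (x k).val / (m k + 2 : ℕ)) : ℝ) : ℂ) * Complex.I by
    push_cast; ring]
  exact Complex.norm_exp_ofReal_mul_I _

lemma vilenkin_eq_prod {v N : ℕ} (hv : v < Mv m N) (x : GV m) :
    vilenkin m v x = ∏ k ∈ Finset.range N, rad m k x ^ digit m v k := by
  unfold vilenkin
  have key : ∀ a b : ℕ, a ≤ b → (∀ k, a ≤ k → digit m v k = 0) →
      ∏ k ∈ Finset.range a, rad m k x ^ digit m v k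
        = ∏ k ∈ Finset.range b, rad m k x ^ digit m v k := by
    intro a b hab hz
    apply Finset.prod_subset (Finset.range_subset_range.mpr hab)
    intro k _ hk
    rw [hz k (le_of_not_gt (fun h => hk (Finset.mem_range.mpr h))), pow_zero]
  rcases le_total v N with h | h
  · exact key v N h (fun k hk => digit_eq_zero_of_le hk)
  · exact (key N v h (fun k hk =>
      digit_eq_zero_of_lt (lt_of_lt_of_le hv (Mv_mono hk)))).symm

lemma rad_pow_card (k : ℕ) (x : GV m) : rad m k x ^ (m k + 2) = 1 := by
  have hne : ((m k : ℂ) + 2) ≠ 0 := by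
    intro h
    have : (m k : ℂ) = -2 := by linear_combination h
    have h2 : (m k : ℝ) = -2 := by exact_mod_cast this
    have : (0 : ℝ) ≤ (m k : ℝ) := Nat.cast_nonneg _
    linarith
  unfold rad
  rw [← Complex.exp_nat_mul]
  rw [show ((m k + 2 : ℕ) : ℂ) * (2 * Real.pi * Complex.I * ((x k).val : ℂ) / ((m k + 2 : ℕ) : ℂ))
      = (((x k).val : ℤ) : ℂ) * (2 * Real.pi * Complex.I) by
    push_cast
    field_simp]
  exact Complex.exp_int_mul_two_pi_mul_I _

lemma rad_ne_one {k : ℕ} {x : GV m} (hx : x k ≠ 0) : rad m k x ≠ 1 := by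
  simp only [rad]
  intro h
  rw [Complex.exp_eq_one_iff] at h
  obtain ⟨n, hn⟩ := h
  have h2πI : (2 * (Real.pi : ℂ) * Complex.I) ≠ 0 := by
    simp [Real.pi_ne_zero, Complex.I_ne_zero]
  have hne : ((m k + 2 : ℕ) : ℂ) ≠ 0 := Nat.cast_ne_zero.mpr (by omega)
  rw [div_eq_iff hne] at hn
  have hvalZ : ((x k).val : ℤ) = n * ((m k : ℤ) + 2) := by
    have hval : (((x k).val : ℕ) : ℂ) = (n : ℂ) * ((m k : ℂ) + 2) := by
      apply mul_left_cancel₀ h2πI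
      push_cast at hn ⊢
      linear_combination hn
    exact_mod_cast hval
  have hpos : 0 < (x k).val := by
    rcases Nat.eq_zero_or_pos (x k).val with h | h
    · exact absurd ((ZMod.val_eq_zero _).mp h) hx
    · exact h
  have hlt : (x k).val < m k + 2 := ZMod.val_lt _
  have h1 : (1 : ℤ) ≤ n := by nlinarith [hvalZ, hpos]
  nlinarith [hvalZ, hlt, h1]

lemma rad_geom_sum (k : ℕ) (x : GV m) :
    ∑ j ∈ Finset.range (m k + 2), rad m k x ^ j
      = if x k = 0 then ((m k + 2 : ℕ) : ℂ) else 0 := by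
  by_cases hx : x k = 0
  · simp only [hx, if_pos rfl]
    have : rad m k x = 1 := by
      simp [rad, hx, ZMod.val_zero]
    simp [this]
  · rw [if_neg hx]
    have hne := rad_ne_one (m := m) hx
    rw [geom_sum_eq hne, rad_pow_card, sub_self, zero_div]

lemma mem_Iset_succ {n : ℕ} {x : GV m} :
    x ∈ Iset m (n+1) ↔ (x ∈ Iset m n ∧ x n = 0) := by
  constructor
  · intro h; exact ⟨fun k hk => h k (by omega), h n (by omega)⟩
  · rintro ⟨h1, h2⟩ k hk
    rcases Nat.lt_or_ge k n with h | h
    · exact h1 k h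
    · have hkn : k = n := by omega
      subst hkn; exact h2

lemma DK_Mv (n : ℕ) (x : GV m) :
    DK m (Mv m n) x = if x ∈ Iset m n then ((Mv m n : ℕ) : ℂ) else 0 := by
  induction n with
  | zero =>
    have hx : x ∈ Iset m 0 := by intro k hk; omega
    simp [DK, Mv, vilenkin, hx]
  | succ n ih =>
    have hsplit : DK m (Mv m (n+1)) x
        = ∑ j ∈ Finset.range (m n + 2), ∑ u ∈ Finset.range (Mv m n),
            vilenkin m (j * Mv m n + u) x := by
      show ∑ v ∈ Finset.range (Mv m (n+1)), vilenkin m v x = _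
      rw [show Mv m (n+1) = (m n + 2) * Mv m n from rfl]
      induction (m n + 2) with
      | zero => simp
      | succ c ihc =>
        rw [Nat.succ_mul, Finset.sum_range_add, ihc, Finset.sum_range_succ]
    have hterm : ∀ j ∈ Finset.range (m n + 2), ∀ u ∈ Finset.range (Mv m n),
        vilenkin m (j * Mv m n + u) x
          = (∏ k ∈ Finset.range n, rad m k x ^ digit m u k) * rad m n x ^ j := by
      intro j hj u hu
      rw [Finset.mem_range] at hj hu
      have hlt : j * Mv m n + u < Mv m (n+1) := by
        rw [show Mv m (n+1) = (m n + 2) * Mv m n from rfl]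
        calc j * Mv m n + u < j * Mv m n + Mv m n := by omega
        _ = (j + 1) * Mv m n := by ring
        _ ≤ (m n + 2) * Mv m n := Nat.mul_le_mul_right _ (by omega)
      rw [vilenkin_eq_prod hlt, Finset.prod_range_succ, digit_high hu hj]
      congr 1
      exact Finset.prod_congr rfl (fun k hk =>
        by rw [digit_low hu (Finset.mem_range.mp hk)])
    have hDK : ∑ u ∈ Finset.range (Mv m n), ∏ k ∈ Finset.range n, rad m k x ^ digit m u k
        = DK m (Mv m n) x :=
      Finset.sum_congr rfl (fun u hu => (vilenkin_eq_prod (Finset.mem_range.mp hu) x).symm)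
    have e1 : DK m (Mv m (n+1)) x
        = (∑ u ∈ Finset.range (Mv m n), ∏ k ∈ Finset.range n, rad m k x ^ digit m u k)
          * (∑ j ∈ Finset.range (m n + 2), rad m n x ^ j) := by
      rw [hsplit]
      rw [Finset.sum_congr rfl (fun j hj => Finset.sum_congr rfl (fun u hu => hterm j hj u hu))]
      rw [Finset.mul_sum]
      exact Finset.sum_congr rfl (fun j _ => (Finset.sum_mul _ _ _).symm)
    rw [e1, hDK, ih, rad_geom_sum]
    by_cases h1 : x ∈ Iset m n <;> by_cases h2 : x n = 0 <;>
      simp [h1, h2, mem_Iset_succ, Mv] <;> push_cast <;> ring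

end Vilenkin
section MeasureLemmas
variable {m : ℕ → ℕ}

instance haarG_prob (m : ℕ → ℕ) : IsProbabilityMeasure (haarG m) :=
  ⟨by simpa [haarG] using Measure.addHaarMeasure_self (K₀ := (⊤ : TopologicalSpace.PositiveCompacts (GV m)))⟩

instance haarG_inv (m : ℕ → ℕ) : (haarG m).IsAddLeftInvariant := by
  unfold haarG; infer_instance

/-- projection to the first n coordinates -/
def projN (m : ℕ → ℕ) (n : ℕ) : GV m → (∀ k : Fin n, ZMod (m k + 2)) := fun x k => x k

lemma measurable_projN (n : ℕ) : Measurable (projN m n) :=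
  measurable_pi_lambda _ fun k => measurable_pi_apply _

lemma measurableSet_finPi {n : ℕ} (S : Set (∀ k : Fin n, ZMod (m k + 2))) :
    MeasurableSet S := by
  have hsing : ∀ y : (∀ k : Fin n, ZMod (m k + 2)), MeasurableSet {y} := by
    intro y
    have : {y} = ⋂ k, (fun z : (∀ k : Fin n, ZMod (m k + 2)) => z k) ⁻¹' {y k} := by
      ext z
      simp [funext_iff]
    rw [this]
    exact MeasurableSet.iInter fun k =>
      (measurable_pi_apply k) (MeasurableSpace.measurableSet_top (s := {y k}))
  rw [← Set.biUnion_of_singleton S]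
  exact MeasurableSet.biUnion S.to_countable (fun y _ => hsing y)

lemma Iset_eq_preimage (n : ℕ) :
    Iset m n = projN m n ⁻¹' {y | ∀ k : Fin n, y k = 0} := by
  ext x
  constructor
  · intro h k; exact h k k.isLt
  · intro h k hk; exact h ⟨k, hk⟩

lemma measurableSet_Iset (n : ℕ) : MeasurableSet (Iset m n) := by
  rw [Iset_eq_preimage]
  exact measurable_projN n (measurableSet_finPi _)

lemma measurableSet_Iset_filtration {j A : ℕ} (hj : j ≤ A) :
    MeasurableSet[filtrationG m A] (Iset m j) := by
  refine ⟨{y | ∀ k : Fin A, (k : ℕ) < j → y k = 0}, measurableSet_finPi _, ?_⟩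
  ext x
  constructor
  · intro h k hk
    exact h ⟨k, lt_of_lt_of_le hk hj⟩ hk
  · intro h k hkj
    exact h k hkj

lemma prod_range_eq_Mv (n : ℕ) : ∏ k ∈ Finset.range n, (m k + 2) = Mv m n := by
  induction n with
  | zero => simp [Mv]
  | succ j ih => rw [Finset.prod_range_succ, ih, show Mv m (j+1) = (m j + 2) * Mv m j from rfl,
      Nat.mul_comm]

lemma card_finPi (n : ℕ) :
    Nat.card (∀ k : Fin n, ZMod (m k + 2)) = Mv m n := by
  have h1 : Nat.card (∀ k : Fin n, ZMod (m k + 2)) = ∏ k : Fin n, (m k + 2) := by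
    simp [Nat.card_pi, Nat.card_zmod]
  rw [h1, Fin.prod_univ_eq_prod_range (fun k => m k + 2), prod_range_eq_Mv]

instance measurableAdd_GV (m : ℕ → ℕ) : MeasurableAdd (GV m) := by
  constructor
  · intro c
    exact measurable_pi_lambda _ fun k => ((measurable_pi_apply k).const_add _)
  · intro c
    exact measurable_pi_lambda _ fun k => ((measurable_pi_apply k).add_const _)

lemma measure_Iset (n : ℕ) : haarG m (Iset m n) = ((Mv m n : ℝ≥0∞))⁻¹ := by
  classical
  set T := ∀ k : Fin n, ZMod (m k + 2)
  -- lift of a tuple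
  let L : T → GV m := fun t k => if h : k < n then t ⟨k, h⟩ else 0
  have hproj : ∀ t : T, projN m n (L t) = t := by
    intro t; funext k
    simp only [projN, L, dif_pos k.isLt]
  -- the coset decomposition
  have hpre : ∀ t : T, (fun x => L t + x) ⁻¹' (projN m n ⁻¹' {t}) = Iset m n := by
    intro t
    ext x
    simp only [Set.mem_preimage, Set.mem_singleton_iff]
    constructor
    · intro h k hk
      have := congrFun h ⟨k, hk⟩
      simp only [projN, Pi.add_apply, L, dif_pos hk] at this
      -- t k + x k = t k
      exact by
        have h' : t ⟨k, hk⟩ + x k = t ⟨k, hk⟩ := this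
        have := add_left_cancel (h'.trans (add_zero _).symm)
        exact this
    · intro h
      funext k
      have hx : x (k : ℕ) = 0 := h k k.isLt
      simp only [projN, Pi.add_apply, L, dif_pos k.isLt, hx, add_zero]
  have hmeas : ∀ t : T, haarG m (projN m n ⁻¹' {t}) = haarG m (Iset m n) := by
    intro t
    rw [← hpre t]
    exact (measure_preimage_add (haarG m) (L t) _).symm
  have hunion : (⋃ t : T, projN m n ⁻¹' {t}) = Set.univ := by
    ext x; simp only [Set.mem_iUnion, Set.mem_univ, iff_true]
    exact ⟨projN m n x, rfl⟩
  have hdisj : Pairwise (Function.onFun Disjoint fun t : T => projN m n ⁻¹' {t}) := by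
    intro t t' htt'
    simp only [Function.onFun, Set.disjoint_left]
    intro x hx hx'
    exact htt' (hx.symm.trans hx')
  have hcount : (1 : ℝ≥0∞) = ∑' t : T, haarG m (projN m n ⁻¹' {t}) := by
    rw [← measure_iUnion hdisj (fun t => measurable_projN n (measurableSet_finPi _)), hunion]
    exact (measure_univ).symm
  have hfin : ∑' t : T, haarG m (projN m n ⁻¹' {t}) = (Mv m n : ℝ≥0∞) * haarG m (Iset m n) := by
    rw [tsum_congr hmeas]
    haveI : Fintype T := by unfold T; infer_instance
    have hcard : Fintype.card T = Mv m n := by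
      rw [← Nat.card_eq_fintype_card]; exact card_finPi n
    rw [tsum_fintype, Finset.sum_const, Finset.card_univ, hcard, nsmul_eq_mul]
  have key : (Mv m n : ℝ≥0∞) * haarG m (Iset m n) = 1 := by rw [← hfin, ← hcount]
  have hne : ((Mv m n : ℝ≥0∞)) ≠ 0 := by
    exact_mod_cast (Mv_pos m n).ne'
  have hnetop : ((Mv m n : ℝ≥0∞)) ≠ ⊤ := ENNReal.natCast_ne_top _
  calc haarG m (Iset m n) = 1 * haarG m (Iset m n) := (one_mul _).symm
  _ = ((Mv m n : ℝ≥0∞)⁻¹ * (Mv m n : ℝ≥0∞)) * haarG m (Iset m n) := by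
      rw [ENNReal.inv_mul_cancel hne hnetop]
  _ = (Mv m n : ℝ≥0∞)⁻¹ * ((Mv m n : ℝ≥0∞) * haarG m (Iset m n)) := by ring
  _ = (Mv m n : ℝ≥0∞)⁻¹ := by rw [key, mul_one]

end MeasureLemmas
section Atom
open scoped Classical
variable {m : ℕ → ℕ}

lemma Iset_antitone {j j' : ℕ} (h : j ≤ j') : Iset m j' ⊆ Iset m j :=
  fun x hx k hk => hx k (lt_of_lt_of_le hk h)

lemma aAtom_eq (M β : ℕ) (x : GV m) :
    aAtom m M β x = ((Mv m (2*β) : ℂ)/(M : ℂ)) *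
      ((Iset m (2*β+1)).indicator (fun _ => ((Mv m (2*β+1) : ℕ) : ℂ)) x
        - (Iset m (2*β)).indicator (fun _ => ((Mv m (2*β) : ℕ) : ℂ)) x) := by
  classical
  unfold aAtom
  rw [DK_Mv, DK_Mv]
  simp [Set.indicator_apply]

lemma aAtom_zero_outside {M β : ℕ} {x : GV m} (hx : x ∉ Iset m (2*β)) :
    aAtom m M β x = 0 := by
  rw [aAtom_eq]
  have hx' : x ∉ Iset m (2*β+1) := fun h => hx (Iset_antitone (by omega) h)
  rw [Set.indicator_of_notMem hx', Set.indicator_of_notMem hx]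
  simp

lemma norm_aAtom_le {M : ℕ} (hM : ∀ k, m k + 2 ≤ M) (β : ℕ) (x : GV m) :
    ‖aAtom m M β x‖ ≤ 2 * ((Mv m (2*β) : ℝ))^2 := by
  have hM2 : (2 : ℕ) ≤ M := le_trans (by omega) (hM 0)
  have hMr : (0 : ℝ) < (M : ℝ) := by exact_mod_cast (by omega : 0 < M)
  rw [aAtom_eq]
  rw [norm_mul]
  have h1 : ‖((Mv m (2*β) : ℂ)/(M : ℂ))‖ = (Mv m (2*β) : ℝ) / (M : ℝ) := by
    rw [norm_div]
    simp [Complex.norm_natCast]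
  rw [h1]
  have h2 : ‖(Iset m (2*β+1)).indicator (fun _ => ((Mv m (2*β+1) : ℕ) : ℂ)) x
        - (Iset m (2*β)).indicator (fun _ => ((Mv m (2*β) : ℕ) : ℂ)) x‖
      ≤ (Mv m (2*β+1) : ℝ) + (Mv m (2*β) : ℝ) := by
    refine le_trans (norm_sub_le _ _) (add_le_add ?_ ?_) <;>
    · refine le_trans (norm_indicator_le_norm_self _ _) ?_
      simp [Complex.norm_natCast]
  calc (Mv m (2*β) : ℝ) / (M : ℝ) * ‖_ - _‖
      ≤ (Mv m (2*β) : ℝ) / (M : ℝ) * ((Mv m (2*β+1) : ℝ) + (Mv m (2*β) : ℝ)) := by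
        apply mul_le_mul_of_nonneg_left h2
        positivity
  _ ≤ 2 * ((Mv m (2*β) : ℝ))^2 := by
      have hstep : (Mv m (2*β+1) : ℝ) ≤ (M : ℝ) * (Mv m (2*β) : ℝ) := by
        have : Mv m (2*β+1) = (m (2*β) + 2) * Mv m (2*β) := rfl
        rw [this]
        push_cast
        apply mul_le_mul_of_nonneg_right _ (by positivity)
        exact_mod_cast hM (2*β)
      have hstep2 : (Mv m (2*β) : ℝ) ≤ (M : ℝ) * (Mv m (2*β) : ℝ) := by
        nlinarith [(by exact_mod_cast (by omega : 1 ≤ M) : (1:ℝ) ≤ (M:ℝ)),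
          (by positivity : (0:ℝ) ≤ (Mv m (2*β) : ℝ))]
      rw [div_mul_eq_mul_div, div_le_iff₀ hMr]
      nlinarith [hstep, hstep2, (by positivity : (0:ℝ) ≤ (Mv m (2*β) : ℝ))]

lemma indicator_integrable (j : ℕ) (c : ℂ) :
    Integrable ((Iset m j).indicator (fun _ => c)) (haarG m) :=
  (integrable_const c).indicator (measurableSet_Iset j)

lemma aAtom_integrable (M β : ℕ) : Integrable (aAtom m M β) (haarG m) := by
  have : aAtom m M β = fun x => ((Mv m (2*β) : ℂ)/(M : ℂ)) *
      ((Iset m (2*β+1)).indicator (fun _ => ((Mv m (2*β+1) : ℕ) : ℂ)) x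
        - (Iset m (2*β)).indicator (fun _ => ((Mv m (2*β) : ℕ) : ℂ)) x) :=
    funext (aAtom_eq M β)
  rw [this]
  exact (((indicator_integrable _ _).sub (indicator_integrable _ _)).const_mul _)

lemma fSeq_integrable (M : ℕ) (α : ℕ → ℕ) (A : ℕ) :
    Integrable (fSeq m M α A) (haarG m) := by
  have : fSeq m M α A = fun x => ∑ k ∈ (Finset.range A).filter (fun k => 2 * α k < A),
      ((α k : ℂ))⁻¹ * aAtom m M (α k) x := rfl
  rw [this]
  exact integrable_finset_sum _ (fun k _ => (aAtom_integrable M (α k)).const_mul _)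

lemma fSeq_stronglyMeasurable (M : ℕ) (α : ℕ → ℕ) (A : ℕ) :
    StronglyMeasurable[filtrationG m A] (fSeq m M α A) := by
  have : fSeq m M α A = fun x => ∑ k ∈ (Finset.range A).filter (fun k => 2 * α k < A),
      ((α k : ℂ))⁻¹ * (((Mv m (2*(α k)) : ℂ)/(M : ℂ)) *
      ((Iset m (2*(α k)+1)).indicator (fun _ => ((Mv m (2*(α k)+1) : ℕ) : ℂ)) x
        - (Iset m (2*(α k))).indicator (fun _ => ((Mv m (2*(α k)) : ℕ) : ℂ)) x)) := by
    funext x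
    exact Finset.sum_congr rfl (fun k _ => by rw [aAtom_eq])
  rw [this]
  apply Finset.stronglyMeasurable_fun_sum
  intro k hk
  rw [Finset.mem_filter] at hk
  have h1 : (2*(α k)+1) ≤ A := by omega
  have h2 : (2*(α k)) ≤ A := by omega
  exact (((stronglyMeasurable_const.indicator (measurableSet_Iset_filtration h1)).sub
    (stronglyMeasurable_const.indicator (measurableSet_Iset_filtration h2))).const_mul
      _).const_mul _

lemma setIntegral_indicator_Iset {A j : ℕ} (hj : A ≤ j) {s : Set (GV m)}
    (hs : MeasurableSet[filtrationG m A] s) (c : ℂ) :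
    ∫ x in s, (Iset m j).indicator (fun _ => c) x ∂ haarG m
      = if (0 : GV m) ∈ s then ((Mv m j : ℝ))⁻¹ • c else 0 := by
  classical
  rw [setIntegral_indicator (measurableSet_Iset j)]
  have hkey : s ∩ Iset m j = if (0 : GV m) ∈ s then Iset m j else ∅ := by
    obtain ⟨T, -, rfl⟩ := hs
    have hmem : ∀ x ∈ Iset m j, (x ∈ (fun x (k : Fin A) => x (k:ℕ)) ⁻¹' T
        ↔ (0 : GV m) ∈ (fun x (k : Fin A) => x (k:ℕ)) ⁻¹' T) := by
      intro x hx
      have : (fun (k : Fin A) => x (k:ℕ)) = (fun (k : Fin A) => (0 : GV m) (k:ℕ)) := by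
        funext k
        exact hx (k:ℕ) (lt_of_lt_of_le k.isLt hj)
      simp only [Set.mem_preimage, this]
    by_cases h0 : (0 : GV m) ∈ (fun x (k : Fin A) => x (k:ℕ)) ⁻¹' T
    · rw [if_pos h0]
      ext x
      constructor
      · exact fun h => h.2
      · intro hx
        exact ⟨(hmem x hx).mpr h0, hx⟩
    · rw [if_neg h0]
      ext x
      constructor
      · intro h
        exact absurd ((hmem x h.2).mp h.1) h0
      · intro h; exact absurd h (Set.notMem_empty x)
  rw [hkey]
  by_cases h0 : (0 : GV m) ∈ s
  · rw [if_pos h0, if_pos h0, setIntegral_const, measureReal_def, measure_Iset]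
    congr 1
    rw [ENNReal.toReal_inv]
    simp
  · rw [if_neg h0, if_neg h0]
    simp

lemma setIntegral_aAtom_zero {M A β : ℕ} (hβ : A ≤ 2*β) {s : Set (GV m)}
    (hs : MeasurableSet[filtrationG m A] s) :
    ∫ x in s, aAtom m M β x ∂ haarG m = 0 := by
  have he : ∀ x, aAtom m M β x = ((Mv m (2*β) : ℂ)/(M : ℂ)) *
      ((Iset m (2*β+1)).indicator (fun _ => ((Mv m (2*β+1) : ℕ) : ℂ)) x
        - (Iset m (2*β)).indicator (fun _ => ((Mv m (2*β) : ℕ) : ℂ)) x) := aAtom_eq M β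
  rw [setIntegral_congr_fun ((filtrationG m).le A s hs) (fun x _ => he x)]
  rw [integral_const_mul]
  rw [integral_sub ((indicator_integrable _ _).integrableOn) ((indicator_integrable _ _).integrableOn)]
  rw [setIntegral_indicator_Iset (by omega) hs, setIntegral_indicator_Iset hβ hs]
  have hv1 : ((Mv m (2*β+1) : ℝ))⁻¹ • ((Mv m (2*β+1) : ℕ) : ℂ) = 1 := by
    rw [Complex.real_smul]
    push_cast
    rw [inv_mul_cancel₀]
    exact_mod_cast (Mv_pos m (2*β+1)).ne'
  have hv2 : ((Mv m (2*β) : ℝ))⁻¹ • ((Mv m (2*β) : ℕ) : ℂ) = 1 := by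
    rw [Complex.real_smul]
    push_cast
    rw [inv_mul_cancel₀]
    exact_mod_cast (Mv_pos m (2*β)).ne'
  by_cases h0 : (0 : GV m) ∈ s
  · rw [if_pos h0, if_pos h0, hv1, hv2]
    simp
  · rw [if_neg h0, if_neg h0]
    simp

end Atom
section Mart
variable {m : ℕ → ℕ}

lemma alpha_ge {α : ℕ → ℕ} (hα : StrictMono α) (hα0 : 0 < α 0) (k : ℕ) : k + 1 ≤ α k := by
  induction k with
  | zero => exact hα0
  | succ j ih => have h2 := hα (show j < j + 1 by omega); omega

lemma fSeq_martingale (M : ℕ) (α : ℕ → ℕ) (hα : StrictMono α) (hα0 : 0 < α 0) :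
    Martingale (fSeq m M α) (filtrationG m) (haarG m) := by
  constructor
  · exact fun A => fSeq_stronglyMeasurable M α A
  · intro A B hAB
    have hm : filtrationG m A ≤ (inferInstance : MeasurableSpace (GV m)) := (filtrationG m).le A
    refine (ae_eq_condExp_of_forall_setIntegral_eq hm (fSeq_integrable M α B)
      (fun s _ _ => (fSeq_integrable M α A).integrableOn)
      (fun s hs _ => ?_)
      ((fSeq_stronglyMeasurable M α A).aestronglyMeasurable)).symm
    -- ∫ fSeq A on s = ∫ fSeq B on s
    have hint : ∀ (C : ℕ), ∫ x in s, fSeq m M α C x ∂ haarG m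
        = ∑ k ∈ (Finset.range C).filter (fun k => 2 * α k < C),
            ∫ x in s, ((α k : ℂ))⁻¹ * aAtom m M (α k) x ∂ haarG m := by
      intro C
      rw [show (fun x => fSeq m M α C x) = fun x => ∑ k ∈ (Finset.range C).filter
          (fun k => 2 * α k < C), ((α k : ℂ))⁻¹ * aAtom m M (α k) x from rfl]
      exact integral_finset_sum _
        (fun k _ => ((aAtom_integrable M (α k)).const_mul _).integrableOn)
    rw [hint A, hint B]
    apply Finset.sum_subset
    · intro k hk
      rw [Finset.mem_filter] at hk ⊢
      have := Finset.mem_range.mp hk.1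
      have := hk.2
      exact ⟨Finset.mem_range.mpr (by omega), by omega⟩
    · intro k hk hk'
      rw [Finset.mem_filter] at hk hk'
      push_neg at hk'
      have hA : A ≤ 2 * α k := by
        by_contra h
        push_neg at h
        have h1 : k + 1 ≤ α k := alpha_ge hα hα0 k
        have h2 := hk' (Finset.mem_range.mpr (by omega))
        omega
      rw [integral_const_mul, setIntegral_aAtom_zero hA hs, mul_zero]

end Mart
section Final
variable {m : ℕ → ℕ}

lemma ennreal_sum_rpow_le {ι : Type*} (s : Finset ι) (f : ι → ℝ≥0∞) {q : ℝ} (hq : 1 ≤ q) :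
    ∑ i ∈ s, (f i) ^ q ≤ (∑ i ∈ s, f i) ^ q := by
  classical
  induction s using Finset.induction with
  | empty => simp [ENNReal.zero_rpow_of_pos (lt_of_lt_of_le zero_lt_one hq)]
  | @insert j s hj ih =>
    rw [Finset.sum_insert hj, Finset.sum_insert hj]
    exact le_trans (add_le_add le_rfl ih) (ENNReal.add_rpow_le_rpow_add _ _ hq)

lemma ennreal_tsum_rpow_le (f : ℕ → ℝ≥0∞) {p : ℝ} (hp0 : 0 < p) (hp1 : p ≤ 1) :
    (∑' i, f i) ^ p ≤ ∑' i, (f i) ^ p := by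
  have hq : 1 ≤ p⁻¹ := by
    have h1 : p * p⁻¹ = 1 := mul_inv_cancel₀ hp0.ne'
    nlinarith [inv_nonneg.mpr hp0.le]
  have key : ∑' i, f i ≤ (∑' i, (f i) ^ p) ^ p⁻¹ := by
    rw [ENNReal.tsum_eq_iSup_sum]
    apply iSup_le
    intro s
    have h1 : ∑ i ∈ s, f i = ∑ i ∈ s, ((f i) ^ p) ^ p⁻¹ :=
      Finset.sum_congr rfl (fun i _ => by
        rw [← ENNReal.rpow_mul, mul_inv_cancel₀ hp0.ne', ENNReal.rpow_one])
    rw [h1]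
    calc ∑ i ∈ s, ((f i) ^ p) ^ p⁻¹ ≤ (∑ i ∈ s, (f i) ^ p) ^ p⁻¹ :=
      ennreal_sum_rpow_le s _ hq
    _ ≤ (∑' i, (f i) ^ p) ^ p⁻¹ :=
      ENNReal.rpow_le_rpow (ENNReal.sum_le_tsum s) (by positivity)
  calc (∑' i, f i) ^ p ≤ ((∑' i, (f i) ^ p) ^ p⁻¹) ^ p :=
    ENNReal.rpow_le_rpow key hp0.le
  _ = ∑' i, (f i) ^ p := by
    rw [← ENNReal.rpow_mul, inv_mul_cancel₀ hp0.ne', ENNReal.rpow_one]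

end Final
/-- The constructed f = (f^{(A)}) is a martingale belonging to the Hardy space H_{1/2}:
the maximal function f* = sup_A |f^{(A)}| satisfies ∫ (f*)^{1/2} dμ < ∞. -/
theorem f_mem_Hardy_half (m : ℕ → ℕ) (M : ℕ) (α : ℕ → ℕ)
    (hα : StrictMono α) (hα0 : 0 < α 0)
    (hM : ∀ k, m k + 2 ≤ M) (hM' : ∃ k, m k + 2 = M)
    (h2 : Summable fun k => ((α k : ℝ)) ^ (-(2 : ℝ)⁻¹)) :
    MeasureTheory.Martingale (fSeq m M α) (filtrationG m) (haarG m) ∧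
    (∫⁻ x, (⨆ A, (‖fSeq m M α A x‖₊ : ℝ≥0∞)) ^ ((2 : ℝ)⁻¹) ∂ haarG m) < ⊤ := by
  classical
  refine ⟨fSeq_martingale M α hα hα0, ?_⟩
  set μ := haarG m
  set g : ℕ → GV m → ℝ≥0∞ := fun k =>
    (Iset m (2 * α k)).indicator
      (fun _ => ENNReal.ofReal ((α k : ℝ)⁻¹ * (2 * ((Mv m (2 * α k) : ℝ))^2))) with hg
  -- pointwise bound on each term
  have hterm : ∀ k (x : GV m),
      (‖((α k : ℂ))⁻¹ * aAtom m M (α k) x‖₊ : ℝ≥0∞) ≤ g k x := by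
    intro k x
    by_cases hx : x ∈ Iset m (2 * α k)
    · rw [hg]
      simp only [Set.indicator_of_mem hx]
      rw [← ENNReal.ofReal_coe_nnreal, coe_nnnorm]
      apply ENNReal.ofReal_le_ofReal
      rw [norm_mul]
      have h1 : ‖((α k : ℂ))⁻¹‖ = (α k : ℝ)⁻¹ := by
        rw [norm_inv]
        simp [Complex.norm_natCast]
      rw [h1]
      exact mul_le_mul_of_nonneg_left (norm_aAtom_le hM (α k) x) (by positivity)
    · rw [aAtom_zero_outside hx, mul_zero]
      simp
  -- bound on the maximal function
  have hsup : ∀ x : GV m, (⨆ A, (‖fSeq m M α A x‖₊ : ℝ≥0∞)) ≤ ∑' k, g k x := by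
    intro x
    apply iSup_le
    intro A
    calc (‖fSeq m M α A x‖₊ : ℝ≥0∞)
        ≤ ∑ k ∈ (Finset.range A).filter (fun k => 2 * α k < A),
            (‖((α k : ℂ))⁻¹ * aAtom m M (α k) x‖₊ : ℝ≥0∞) := by
          rw [← ENNReal.coe_finset_sum]
          exact ENNReal.coe_le_coe.mpr (nnnorm_sum_le _ _)
    _ ≤ ∑ k ∈ (Finset.range A).filter (fun k => 2 * α k < A), g k x :=
        Finset.sum_le_sum (fun k _ => hterm k x)
    _ ≤ ∑' k, g k x := ENNReal.sum_le_tsum _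
  -- integral of each piece
  have hgmeas : ∀ k, Measurable (fun x => (g k x) ^ ((2:ℝ)⁻¹)) := by
    intro k
    exact (ENNReal.continuous_rpow_const.measurable).comp
      (measurable_const.indicator (measurableSet_Iset _))
  have hint : ∀ k, ∫⁻ x, (g k x) ^ ((2:ℝ)⁻¹) ∂ μ
      ≤ 2 * ENNReal.ofReal ((α k : ℝ) ^ (-(2:ℝ)⁻¹)) := by
    intro k
    set c : ℕ := Mv m (2 * α k) with hc
    have hrpow : ∀ x : GV m, (g k x) ^ ((2:ℝ)⁻¹)
        = (Iset m (2 * α k)).indicator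
          (fun _ => (ENNReal.ofReal ((α k : ℝ)⁻¹ * (2 * (c : ℝ)^2))) ^ ((2:ℝ)⁻¹)) x := by
      intro x
      by_cases hx : x ∈ Iset m (2 * α k)
      · rw [hg]; simp only [Set.indicator_of_mem hx]; rfl
      · rw [hg]; simp only [Set.indicator_of_notMem hx]
        rw [ENNReal.zero_rpow_of_pos (by norm_num)]
    rw [lintegral_congr hrpow, lintegral_indicator (measurableSet_Iset _),
      setLIntegral_const, measure_Iset]
    -- now bound the constant
    have hαpos : 0 < (α k : ℝ) := by
      have := alpha_ge hα hα0 k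
      exact_mod_cast (by omega : 0 < α k)
    have hcpos : 0 < (c : ℝ) := by exact_mod_cast Mv_pos m (2 * α k)
    have hconst : (ENNReal.ofReal ((α k : ℝ)⁻¹ * (2 * (c : ℝ)^2))) ^ ((2:ℝ)⁻¹)
        ≤ ENNReal.ofReal ((α k : ℝ) ^ (-(2:ℝ)⁻¹) * (2 * (c : ℝ))) := by
      rw [ENNReal.ofReal_rpow_of_nonneg (by positivity) (by norm_num)]
      apply ENNReal.ofReal_le_ofReal
      rw [Real.mul_rpow (by positivity) (by positivity)]
      have e1 : ((α k : ℝ)⁻¹) ^ ((2:ℝ)⁻¹) = (α k : ℝ) ^ (-(2:ℝ)⁻¹) := by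
        rw [Real.inv_rpow hαpos.le, Real.rpow_neg hαpos.le]
      rw [e1]
      apply mul_le_mul_of_nonneg_left _ (by positivity)
      have h4 : (2 * (c : ℝ)^2) ≤ (2 * (c : ℝ))^2 := by nlinarith
      calc (2 * (c : ℝ)^2) ^ ((2:ℝ)⁻¹) ≤ ((2 * (c : ℝ))^2) ^ ((2:ℝ)⁻¹) :=
        Real.rpow_le_rpow (by positivity) h4 (by norm_num)
      _ = 2 * (c : ℝ) := by
        rw [show ((2:ℝ)⁻¹) = (((2:ℕ) : ℝ))⁻¹ by norm_num]
        exact Real.pow_rpow_inv_natCast (by positivity) (by norm_num)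
    calc (ENNReal.ofReal ((α k : ℝ)⁻¹ * (2 * (c : ℝ)^2))) ^ ((2:ℝ)⁻¹) * ((c : ℝ≥0∞))⁻¹
        ≤ ENNReal.ofReal ((α k : ℝ) ^ (-(2:ℝ)⁻¹) * (2 * (c : ℝ))) * ((c : ℝ≥0∞))⁻¹ :=
          mul_le_mul_left hconst _
    _ = 2 * ENNReal.ofReal ((α k : ℝ) ^ (-(2:ℝ)⁻¹)) := by
        rw [ENNReal.ofReal_mul (by positivity)]
        rw [show ((2 : ℝ) * (c : ℝ)) = (((2 * c : ℕ) : ℝ)) by push_cast; ring]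
        rw [ENNReal.ofReal_natCast]
        have hcne : ((c : ℝ≥0∞)) ≠ 0 := by
          exact_mod_cast (Mv_pos m (2 * α k)).ne'
        have hcnetop : ((c : ℝ≥0∞)) ≠ ⊤ := ENNReal.natCast_ne_top _
        rw [show ((2 * c : ℕ) : ℝ≥0∞) = 2 * (c : ℝ≥0∞) by push_cast; ring]
        rw [mul_assoc, mul_assoc, ENNReal.mul_inv_cancel hcne hcnetop, mul_one]
        ring
  -- put everything together
  calc ∫⁻ x, (⨆ A, (‖fSeq m M α A x‖₊ : ℝ≥0∞)) ^ ((2 : ℝ)⁻¹) ∂ μ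
      ≤ ∫⁻ x, (∑' k, g k x) ^ ((2 : ℝ)⁻¹) ∂ μ :=
        lintegral_mono (fun x => ENNReal.rpow_le_rpow (hsup x) (by norm_num))
  _ ≤ ∫⁻ x, ∑' k, (g k x) ^ ((2 : ℝ)⁻¹) ∂ μ :=
        lintegral_mono (fun x => ennreal_tsum_rpow_le _ (by norm_num) (by norm_num))
  _ = ∑' k, ∫⁻ x, (g k x) ^ ((2 : ℝ)⁻¹) ∂ μ :=
        lintegral_tsum (fun k => (hgmeas k).aemeasurable)
  _ ≤ ∑' k, 2 * ENNReal.ofReal ((α k : ℝ) ^ (-(2:ℝ)⁻¹)) :=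
        ENNReal.tsum_le_tsum hint
  _ = 2 * ∑' k, ENNReal.ofReal ((α k : ℝ) ^ (-(2:ℝ)⁻¹)) := ENNReal.tsum_mul_left
  _ < ⊤ := by
      rw [← ENNReal.ofReal_tsum_of_nonneg (fun k => Real.rpow_nonneg (Nat.cast_nonneg _) _) h2]
      exact ENNReal.mul_lt_top (by norm_num) ENNReal.ofReal_lt_top

end
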